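/- Let R be a commutative ring containing a non-trivial idempotent e (e² = e, e ≠ 0, e ≠ 1). Then H = R[X]/<eX> is a Hopf algebra over R that is projective as an R-module, is not finitely generated as an R-module, and contains a non-zero integral (the image of e). In particular, R[X] = <eX> ⊕ Re ⊕ R(1−e)[X] as R-modules. -/

import Mathlib

universe u

open Polynomial

/-- A left integral: `h * t = ε(h) • t` for all `h`. -/
def IsLeftIntegral (R : Type u) {H : Type*} [CommRing R] [Ring H] [HopfAlgebra R H]
    (t : H) : Prop :=
  ∀ h : H, h * t = Coalgebra.counit (R := R) h • t

/-- A right integral: `t * h = ε(h) • t` for all `h`. -/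
def IsRightIntegral (R : Type u) {H : Type*} [CommRing R] [Ring H] [HopfAlgebra R H]
    (t : H) : Prop :=
  ∀ h : H, t * h = Coalgebra.counit (R := R) h • t

set_option maxHeartbeats 1000000
set_option synthInstance.maxHeartbeats 400000
namespace ProjHopfAux
open TensorProduct
variable {R : Type u} [CommRing R] (e : R)

lemma mem_I_iff (he : IsIdempotentElem e) (f : R[X]) :
    f ∈ Ideal.span {C e * X} ↔ f.coeff 0 = 0 ∧ C e * f = f := by
  constructor
  · intro hf
    obtain ⟨c, rfl⟩ := Ideal.mem_span_singleton'.mp hf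
    constructor
    · simp [Polynomial.mul_coeff_zero]
    · calc C e * (c * (C e * X)) = c * ((C e * C e) * X) := by ring
      _ = c * (C e * X) := by rw [← C_mul, he]
  · rintro ⟨h0, h1⟩
    rw [Ideal.mem_span_singleton']
    refine ⟨f.divX, ?_⟩
    have hf : f.divX * X = f := by
      conv_rhs => rw [← f.divX_mul_X_add, h0]
      simp
    calc f.divX * (C e * X) = C e * (f.divX * X) := by ring
    _ = f := by rw [hf, h1]

lemma mk_Ce_mul (he : IsIdempotentElem e) (f : R[X]) :
    Ideal.Quotient.mk (Ideal.span {C e * X}) (C e * f)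
      = Ideal.Quotient.mk (Ideal.span {C e * X}) (C (e * f.coeff 0)) := by
  rw [Ideal.Quotient.mk_eq_mk_iff_sub_mem, mem_I_iff e he]
  have h2 : (C e : R[X]) * C e = C e := by rw [← C_mul, he]
  rw [C_mul]
  refine ⟨?_, ?_⟩
  · simp [Polynomial.coeff_sub, Polynomial.mul_coeff_zero]
  · rw [mul_sub, ← mul_assoc, h2, ← mul_assoc, h2]

lemma integral_prop (he : IsIdempotentElem e) (f : R[X]) :
    Ideal.Quotient.mk (Ideal.span {C e * X}) (C e) * Ideal.Quotient.mk (Ideal.span {C e * X}) f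
      = f.coeff 0 • Ideal.Quotient.mk (Ideal.span {C e * X}) (C e) := by
  have hr : f.coeff 0 • Ideal.Quotient.mk (Ideal.span {C e * X}) (C e)
      = Ideal.Quotient.mk (Ideal.span {C e * X}) (f.coeff 0 • C e) :=
    (map_smul (Ideal.Quotient.mkₐ R (Ideal.span {C e * X})) _ _).symm
  rw [hr, ← map_mul, mk_Ce_mul e he f, smul_C, smul_eq_mul, mul_comm e (f.coeff 0)]

lemma mk_Ce_ne (he : IsIdempotentElem e) (he0 : e ≠ 0) :
    Ideal.Quotient.mk (Ideal.span {C e * X}) (C e) ≠ 0 := by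
  rw [Ne, Ideal.Quotient.eq_zero_iff_mem, mem_I_iff e he]
  rintro ⟨h0, -⟩
  exact he0 (by simpa using h0)


noncomputable def pr : R[X] →ₗ[R] R[X] where
  toFun f := C (e * f.coeff 0) + (1 - C e) * f
  map_add' f g := by
    simp only [Polynomial.coeff_add, mul_add, C_add]
    ring
  map_smul' r f := by
    simp only [Polynomial.coeff_smul, smul_eq_mul, RingHom.id_apply]
    simp only [Polynomial.smul_eq_C_mul, C_mul]
    ring

theorem projH (he : IsIdempotentElem e) :
    Module.Projective R (R[X] ⧸ Ideal.span {C e * X}) := by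
  have key : ∀ f : R[X], Ideal.Quotient.mk (Ideal.span {C e * X}) (pr e f)
      = Ideal.Quotient.mk (Ideal.span {C e * X}) f := by
    intro f
    have h := mk_Ce_mul e he f
    have h2 : pr e f = C (e * f.coeff 0) + (f - C e * f) := by
      simp only [pr, LinearMap.coe_mk, AddHom.coe_mk]
      ring
    rw [h2, map_add, map_sub, h]
    ring
  have hker : (Ideal.span {C e * X}).restrictScalars R ≤ LinearMap.ker (pr e) := by
    intro f hf
    rw [Submodule.restrictScalars_mem, mem_I_iff e he] at hf
    obtain ⟨h0, h1⟩ := hf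
    simp only [LinearMap.mem_ker, pr, LinearMap.coe_mk, AddHom.coe_mk, h0, mul_zero, map_zero,
      zero_add, sub_mul, one_mul, h1, sub_self]
  let i : (R[X] ⧸ Ideal.span {C e * X}) →ₗ[R] R[X] :=
    (((Ideal.span {C e * X}).restrictScalars R).liftQ (pr e) hker).comp
      (Submodule.Quotient.restrictScalarsEquiv R
        ((Ideal.span {C e * X}) : Submodule R[X] R[X])).symm.toLinearMap
  haveI : Module.Free R R[X] := Module.Free.of_basis (Polynomial.basisMonomials R)
  refine Module.Projective.of_split i (Ideal.Quotient.mkₐ R _).toLinearMap ?_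
  apply LinearMap.ext
  intro a
  obtain ⟨f, rfl⟩ := Ideal.Quotient.mk_surjective a
  have h1 : (Submodule.Quotient.restrictScalarsEquiv R
        ((Ideal.span {C e * X}) : Submodule R[X] R[X])).symm
        (Ideal.Quotient.mk (Ideal.span {C e * X}) f) = Submodule.Quotient.mk f :=
    Submodule.Quotient.restrictScalarsEquiv_symm_mk R _ f
  simp only [LinearMap.coe_comp, Function.comp_apply, LinearMap.id_coe, id_eq,
    LinearEquiv.coe_coe, i, h1, Submodule.liftQ_apply, AlgHom.toLinearMap_apply,
    Ideal.Quotient.mkₐ_eq_mk]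
  exact key f

theorem notFinH (he : IsIdempotentElem e) (he1 : e ≠ 1) :
    ¬ Module.Finite R (R[X] ⧸ Ideal.span {C e * X}) := by
  intro hfin
  have hne : Ideal.span {e} ≠ (⊤ : Ideal R) := by
    rw [Ne, Ideal.span_singleton_eq_top]
    intro hu
    exact he1 (hu.mul_left_cancel (by rw [he, mul_one]))
  haveI : Nontrivial (R ⧸ Ideal.span {e}) := Ideal.Quotient.nontrivial_iff.mpr hne
  let φ : R[X] →ₐ[R] (R ⧸ Ideal.span {e})[X] :=
    Polynomial.mapAlgHom (Ideal.Quotient.mkₐ R (Ideal.span {e}))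
  have hφ : φ (C e * X) = 0 := by
    have : Ideal.Quotient.mk (Ideal.span {e}) e = 0 :=
      Ideal.Quotient.eq_zero_iff_mem.mpr (Ideal.subset_span rfl)
    simp [φ, this]
  let ψ : (R[X] ⧸ Ideal.span {C e * X}) →ₐ[R] (R ⧸ Ideal.span {e})[X] :=
    Ideal.Quotient.liftₐ _ φ (by
      intro a ha
      obtain ⟨c, rfl⟩ := Ideal.mem_span_singleton'.mp ha
      rw [map_mul, hφ, mul_zero])
  have hsurj : Function.Surjective ψ := by
    intro g
    obtain ⟨p, hp⟩ := Polynomial.map_surjective _ (Ideal.Quotient.mk_surjective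
      (I := Ideal.span {e})) g
    exact ⟨Ideal.Quotient.mk _ p, by
      simp [ψ, Ideal.Quotient.liftₐ_apply, φ]; exact hp⟩
  haveI : Module.Finite R ((R ⧸ Ideal.span {e})[X]) :=
    Module.Finite.of_surjective ψ.toLinearMap hsurj
  haveI : Module.Finite (R ⧸ Ideal.span {e}) ((R ⧸ Ideal.span {e})[X]) :=
    Module.Finite.of_restrictScalars_finite R _ _
  exact Polynomial.not_finite this

theorem directSumH (he : IsIdempotentElem e) :
    DirectSum.IsInternal (M := R[X])
      (fun i : Fin 3 =>
        if i = 0 then Submodule.restrictScalars R (Ideal.span {(C e) * X})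
        else if i = 1 then Submodule.span R {(C e : R[X])}
        else Submodule.restrictScalars R (Ideal.span {(C (1 - e) : R[X])})) := by
  set A : Fin 3 → Submodule R R[X] := fun i =>
        if i = 0 then Submodule.restrictScalars R (Ideal.span {(C e) * X})
        else if i = 1 then Submodule.span R {(C e : R[X])}
        else Submodule.restrictScalars R (Ideal.span {(C (1 - e) : R[X])}) with hA
  have eA0 : A 0 = Submodule.restrictScalars R (Ideal.span {(C e) * X}) := rfl
  have eA1 : A 1 = Submodule.span R {(C e : R[X])} := rfl
  have eA2 : A 2 = Submodule.restrictScalars R (Ideal.span {(C (1 - e) : R[X])}) := rfl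
  have h2 : (C e : R[X]) * C e = C e := by rw [← C_mul, he]
  have hA0 : ∀ f : R[X], f ∈ A 0 ↔ f.coeff 0 = 0 ∧ C e * f = f := by
    intro f
    rw [eA0, Submodule.restrictScalars_mem]
    exact mem_I_iff e he f
  have hA1 : ∀ f : R[X], f ∈ A 1 ↔ ∃ r : R, r • (C e : R[X]) = f := by
    intro f
    rw [eA1]
    exact Submodule.mem_span_singleton
  have hA2 : ∀ f : R[X], f ∈ A 2 ↔ C e * f = 0 := by
    intro f
    rw [eA2, Submodule.restrictScalars_mem, Ideal.mem_span_singleton']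
    constructor
    · rintro ⟨c, rfl⟩
      calc C e * (c * C (1 - e)) = c * C (e * (1 - e)) := by rw [C_mul]; ring
      _ = 0 := by
        have : e * (1 - e) = 0 := by rw [mul_sub, mul_one, he.eq, sub_self]
        rw [this]; simp
    · intro h
      refine ⟨f, ?_⟩
      have h1e : (C (1 - e) : R[X]) = 1 - C e := by simp
      rw [h1e, mul_sub, mul_one, mul_comm f (C e), h, sub_zero]
  have hCe1 : ∀ f : R[X], f ∈ A 1 → C e * f = f := by
    intro f hf
    obtain ⟨r, rfl⟩ := (hA1 f).mp hf
    rw [mul_smul_comm, h2]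
  have hconst : ∀ f : R[X], f ∈ A 1 → f.coeff 0 = 0 → f = 0 := by
    intro f hf h0
    obtain ⟨r, rfl⟩ := (hA1 f).mp hf
    have : r * e = 0 := by simpa [Polynomial.smul_C] using h0
    simp [Polynomial.smul_C, smul_eq_mul, this]
  apply DirectSum.isInternal_submodule_of_iSupIndep_of_iSup_eq_top
  · -- independence
    intro i
    fin_cases i
    · have hb : (⨆ j, ⨆ (_ : j ≠ (0 : Fin 3)), A j) ≤ A 1 ⊔ A 2 := by
        refine iSup_le fun j => iSup_le fun hj => ?_
        fin_cases j
        · exact absurd rfl hj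
        · exact le_sup_left
        · exact le_sup_right
      refine Disjoint.mono_right hb (Submodule.disjoint_def.mpr ?_)
      intro f hf0 hf12
      obtain ⟨b, hb1, c, hc2, hsum⟩ := Submodule.mem_sup.mp hf12
      obtain ⟨h0, hfix⟩ := (hA0 f).mp hf0
      have hc : C e * c = 0 := (hA2 c).mp hc2
      have hb' : C e * b = b := hCe1 b hb1
      have hfb : f = b := by rw [← hfix, ← hsum, mul_add, hb', hc, add_zero]
      exact hconst f (hfb ▸ hb1) h0
    · have hb : (⨆ j, ⨆ (_ : j ≠ (1 : Fin 3)), A j) ≤ A 0 ⊔ A 2 := by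
        refine iSup_le fun j => iSup_le fun hj => ?_
        fin_cases j
        · exact le_sup_left
        · exact absurd rfl hj
        · exact le_sup_right
      refine Disjoint.mono_right hb (Submodule.disjoint_def.mpr ?_)
      intro f hf1 hf02
      obtain ⟨a, ha0, c, hc2, hsum⟩ := Submodule.mem_sup.mp hf02
      have hfix := hCe1 f hf1
      obtain ⟨ha0', hafix⟩ := (hA0 a).mp ha0
      have hc := (hA2 c).mp hc2
      have hfa : f = a := by rw [← hfix, ← hsum, mul_add, hafix, hc, add_zero]
      exact hconst f hf1 (by rw [hfa]; exact ha0')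
    · have hb : (⨆ j, ⨆ (_ : j ≠ (2 : Fin 3)), A j) ≤ A 0 ⊔ A 1 := by
        refine iSup_le fun j => iSup_le fun hj => ?_
        fin_cases j
        · exact le_sup_left
        · exact le_sup_right
        · exact absurd rfl hj
      refine Disjoint.mono_right hb (Submodule.disjoint_def.mpr ?_)
      intro f hf2 hf01
      obtain ⟨a, ha0, b, hb1, hsum⟩ := Submodule.mem_sup.mp hf01
      have hzero : C e * f = 0 := (hA2 f).mp hf2
      obtain ⟨-, hafix⟩ := (hA0 a).mp ha0
      rw [← hsum, mul_add, hafix, hCe1 b hb1] at hzero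
      rw [← hsum, hzero]
  · -- iSup = ⊤
    rw [eq_top_iff]
    rintro f -
    have h0 : C e * (f - C (f.coeff 0)) ∈ A 0 := by
      rw [hA0]
      constructor
      · simp [Polynomial.mul_coeff_zero]
      · rw [← mul_assoc, h2]
    have h1 : (f.coeff 0) • (C e : R[X]) ∈ A 1 := by
      rw [hA1]; exact ⟨f.coeff 0, rfl⟩
    have h2' : (1 - C e) * f ∈ A 2 := by
      rw [hA2, ← mul_assoc, mul_sub, mul_one, h2, sub_self, zero_mul]
    have hdec : f = C e * (f - C (f.coeff 0)) + (f.coeff 0) • C e + (1 - C e) * f := by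
      rw [Polynomial.smul_C, smul_eq_mul, C_mul]
      ring
    rw [hdec]
    exact add_mem (add_mem (Submodule.mem_iSup_of_mem 0 h0)
      (Submodule.mem_iSup_of_mem 1 h1)) (Submodule.mem_iSup_of_mem 2 h2')


lemma quotAlgHom_ext {B : Type*} [Semiring B] [Algebra R B]
    {f g : (R[X] ⧸ Ideal.span {C e * X}) →ₐ[R] B}
    (h : f (Ideal.Quotient.mk _ X) = g (Ideal.Quotient.mk _ X)) : f = g := by
  apply Ideal.Quotient.algHom_ext
  apply Polynomial.algHom_ext
  simpa using h

lemma e_smul_x :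
    e • (Ideal.Quotient.mk (Ideal.span {C e * X}) X) = 0 := by
  have h1 : algebraMap R (R[X] ⧸ Ideal.span {C e * X}) e
      = Ideal.Quotient.mk (Ideal.span {C e * X}) (C e) := rfl
  have h2 : e • (Ideal.Quotient.mk (Ideal.span {C e * X}) X)
      = Ideal.Quotient.mk (Ideal.span {C e * X}) (e • X) :=
    (map_smul (Ideal.Quotient.mkₐ R (Ideal.span {C e * X})) e X).symm
  rw [h2, Ideal.Quotient.eq_zero_iff_mem, Polynomial.smul_eq_C_mul]
  exact Ideal.subset_span rfl

lemma lift_cond {B : Type*} [CommRing B] [Algebra R B] (φ : R[X] →ₐ[R] B)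
    (h : φ (C e * X) = 0) : ∀ a ∈ Ideal.span {C e * X}, φ a = 0 := by
  intro a ha
  obtain ⟨c, rfl⟩ := Ideal.mem_span_singleton'.mp ha
  rw [map_mul, h, mul_zero]

/-- the counit -/
noncomputable def Hε : (R[X] ⧸ Ideal.span {C e * X}) →ₐ[R] R :=
  Ideal.Quotient.liftₐ _ (aeval (0 : R)) (lift_cond e _ (by simp))

/-- aux for comultiplication -/
noncomputable def HΔaux : R[X] →ₐ[R]
    (R[X] ⧸ Ideal.span {C e * X}) ⊗[R] (R[X] ⧸ Ideal.span {C e * X}) :=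
  aeval (Ideal.Quotient.mk (Ideal.span {C e * X}) X ⊗ₜ[R] 1 +
      1 ⊗ₜ[R] Ideal.Quotient.mk (Ideal.span {C e * X}) X)

lemma HΔaux_cond : (HΔaux e) (C e * X) = 0 := by
  rw [HΔaux, map_mul, aeval_X, aeval_C, ← Algebra.smul_def, smul_add]
  have hx := e_smul_x e
  have t1 : e • (Ideal.Quotient.mk (Ideal.span {C e * X}) X ⊗ₜ[R]
      (1 : R[X] ⧸ Ideal.span {C e * X})) = 0 := by
    rw [smul_tmul', hx, zero_tmul]
  have t2 : e • ((1 : R[X] ⧸ Ideal.span {C e * X}) ⊗ₜ[R]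
      Ideal.Quotient.mk (Ideal.span {C e * X}) X) = 0 := by
    rw [← tmul_smul, hx, tmul_zero]
  rw [t1, t2, add_zero]

/-- the comultiplication -/
lemma HΔcond : ∀ a ∈ Ideal.span {C e * X}, (HΔaux e) a = 0 := by
  intro a ha
  obtain ⟨c, rfl⟩ := Ideal.mem_span_singleton'.mp ha
  rw [map_mul, HΔaux_cond e]
  exact mul_zero ((HΔaux e) c)

noncomputable def HΔ : (R[X] ⧸ Ideal.span {C e * X}) →ₐ[R]
    (R[X] ⧸ Ideal.span {C e * X}) ⊗[R] (R[X] ⧸ Ideal.span {C e * X}) :=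
  Ideal.Quotient.liftₐ _ (HΔaux e) (HΔcond e)

/-- the antipode -/
noncomputable def HS : (R[X] ⧸ Ideal.span {C e * X}) →ₐ[R] (R[X] ⧸ Ideal.span {C e * X}) :=
  Ideal.Quotient.liftₐ _ (aeval (-(Ideal.Quotient.mk (Ideal.span {C e * X}) X)))
    (lift_cond e _ (by
      rw [map_mul, aeval_X, aeval_C, ← Algebra.smul_def, smul_neg, e_smul_x e, neg_zero]))

@[simp] lemma Hε_mk_X : Hε e (Ideal.Quotient.mk (Ideal.span {C e * X}) X) = 0 := by
  simp [Hε, Ideal.Quotient.liftₐ_apply, Ideal.Quotient.lift_mk]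

@[simp] lemma Hε_mk (f : R[X]) :
    Hε e (Ideal.Quotient.mk (Ideal.span {C e * X}) f) = f.coeff 0 := by
  simp [Hε, Ideal.Quotient.liftₐ_apply, Ideal.Quotient.lift_mk]
  exact (Polynomial.coeff_zero_eq_eval_zero f).symm

@[simp] lemma HΔ_mk_X : HΔ e (Ideal.Quotient.mk (Ideal.span {C e * X}) X)
    = Ideal.Quotient.mk (Ideal.span {C e * X}) X ⊗ₜ[R] 1 +
      1 ⊗ₜ[R] Ideal.Quotient.mk (Ideal.span {C e * X}) X := by
  simp [HΔ, HΔaux, Ideal.Quotient.liftₐ_apply, Ideal.Quotient.lift_mk]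
  exact aeval_X _

@[simp] lemma HS_mk_X : HS e (Ideal.Quotient.mk (Ideal.span {C e * X}) X)
    = -(Ideal.Quotient.mk (Ideal.span {C e * X}) X) := by
  simp [HS, Ideal.Quotient.liftₐ_apply, Ideal.Quotient.lift_mk]
  exact aeval_X _


lemma mapRight_toLinearMap {A B C : Type*} [Semiring A] [Semiring B] [Semiring C]
    [Algebra R A] [Algebra R B] [Algebra R C] (f : A →ₐ[R] B) :
    (Algebra.TensorProduct.map f (AlgHom.id R C)).toLinearMap = f.toLinearMap.rTensor C := by
  apply TensorProduct.ext'
  intro a c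
  simp

lemma mapLeft_toLinearMap {A B C : Type*} [Semiring A] [Semiring B] [Semiring C]
    [Algebra R A] [Algebra R B] [Algebra R C] (f : A →ₐ[R] B) :
    (Algebra.TensorProduct.map (AlgHom.id R C) f).toLinearMap = f.toLinearMap.lTensor C := by
  apply TensorProduct.ext'
  intro a c
  simp

noncomputable def theCoalgebra : Coalgebra R (R[X] ⧸ Ideal.span {C e * X}) where
  comul := (HΔ e).toLinearMap
  counit := (Hε e).toLinearMap
  coassoc := by
    have h3 : ((Algebra.TensorProduct.assoc R R R (R[X] ⧸ Ideal.span {C e * X})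
        (R[X] ⧸ Ideal.span {C e * X}) (R[X] ⧸ Ideal.span {C e * X})).toAlgHom.toLinearMap)
        = (TensorProduct.assoc R _ _ _).toLinearMap := by
      apply TensorProduct.ext_threefold
      intro a b c
      simp [Algebra.TensorProduct.assoc_tmul]
    have key : ((Algebra.TensorProduct.assoc R R R (R[X] ⧸ Ideal.span {C e * X})
          (R[X] ⧸ Ideal.span {C e * X}) (R[X] ⧸ Ideal.span {C e * X})).toAlgHom.comp
        ((Algebra.TensorProduct.map (HΔ e) (AlgHom.id R _)).comp (HΔ e)))
        = (Algebra.TensorProduct.map (AlgHom.id R _) (HΔ e)).comp (HΔ e) := by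
      apply quotAlgHom_ext e
      simp [Algebra.TensorProduct.assoc_tmul, Algebra.TensorProduct.one_def, tmul_add, add_tmul, add_assoc]
      have h1 : (HΔ e) 1 = 1 := (HΔ e).map_one
      rw [h1]
      simp [Algebra.TensorProduct.assoc_tmul, Algebra.TensorProduct.one_def, tmul_add, add_tmul, add_assoc]
    apply LinearMap.ext
    intro a
    have hk := DFunLike.congr_fun key a
    simp only [AlgHom.comp_apply, AlgEquiv.toAlgHom_eq_coe, AlgHom.coe_coe] at hk
    show (TensorProduct.assoc R _ _ _) (((HΔ e).toLinearMap.rTensor _) ((HΔ e) a))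
        = ((HΔ e).toLinearMap.lTensor _) ((HΔ e) a)
    rw [← mapRight_toLinearMap, ← mapLeft_toLinearMap]
    have h3' := DFunLike.congr_fun h3
      ((Algebra.TensorProduct.map (HΔ e) (AlgHom.id R _)) ((HΔ e) a))
    exact h3'.symm.trans hk
  rTensor_counit_comp_comul := by
    have key : (Algebra.TensorProduct.map (Hε e) (AlgHom.id R _)).comp (HΔ e)
        = (Algebra.TensorProduct.includeRight :
            (R[X] ⧸ Ideal.span {C e * X}) →ₐ[R] R ⊗[R] (R[X] ⧸ Ideal.span {C e * X})) := by
      apply quotAlgHom_ext e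
      simp [Algebra.TensorProduct.one_def]
    apply LinearMap.ext
    intro a
    have hk := DFunLike.congr_fun key a
    simp only [AlgHom.comp_apply] at hk
    show ((Hε e).toLinearMap.rTensor _) ((HΔ e) a) = (1 : R) ⊗ₜ[R] a
    rw [← mapRight_toLinearMap]
    exact hk
  lTensor_counit_comp_comul := by
    have key : (Algebra.TensorProduct.map (AlgHom.id R _) (Hε e)).comp (HΔ e)
        = (Algebra.TensorProduct.includeLeft :
            (R[X] ⧸ Ideal.span {C e * X}) →ₐ[R] (R[X] ⧸ Ideal.span {C e * X}) ⊗[R] R) := by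
      apply quotAlgHom_ext e
      simp [Algebra.TensorProduct.one_def]
    apply LinearMap.ext
    intro a
    have hk := DFunLike.congr_fun key a
    simp only [AlgHom.comp_apply] at hk
    show ((Hε e).toLinearMap.lTensor _) ((HΔ e) a) = a ⊗ₜ[R] (1 : R)
    rw [← mapLeft_toLinearMap]
    exact hk

noncomputable def theBialgebra : Bialgebra R (R[X] ⧸ Ideal.span {C e * X}) :=
  letI : Coalgebra R (R[X] ⧸ Ideal.span {C e * X}) := theCoalgebra e
  Bialgebra.mk' R (R[X] ⧸ Ideal.span {C e * X}) (map_one (Hε e))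
    (fun {a b} => map_mul (Hε e) a b) ((HΔ e).map_one) (fun {a b} => map_mul (HΔ e) a b)

lemma lmul'_toLinearMap : (Algebra.TensorProduct.lmul' R
    (S := R[X] ⧸ Ideal.span {C e * X})).toLinearMap
    = LinearMap.mul' R (R[X] ⧸ Ideal.span {C e * X}) := by
  apply TensorProduct.ext'
  intro a b
  simp [LinearMap.mul'_apply]

noncomputable def theHopf : HopfAlgebra R (R[X] ⧸ Ideal.span {C e * X}) where
  toBialgebra := theBialgebra e
  antipode := (HS e).toLinearMap
  mul_antipode_rTensor_comul := by
    have key : (Algebra.TensorProduct.lmul' R).comp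
        ((Algebra.TensorProduct.map (HS e) (AlgHom.id R _)).comp (HΔ e))
        = (Algebra.ofId R _).comp (Hε e) := by
      apply quotAlgHom_ext e
      simp [Algebra.TensorProduct.lmul'_apply_tmul, Algebra.ofId_apply]
    apply LinearMap.ext
    intro a
    have hk := DFunLike.congr_fun key a
    simp only [AlgHom.comp_apply] at hk
    show LinearMap.mul' R _ (((HS e).toLinearMap.rTensor _) ((HΔ e) a))
        = algebraMap R _ ((Hε e) a)
    rw [← mapRight_toLinearMap, ← lmul'_toLinearMap]
    exact hk
  mul_antipode_lTensor_comul := by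
    have key : (Algebra.TensorProduct.lmul' R).comp
        ((Algebra.TensorProduct.map (AlgHom.id R _) (HS e)).comp (HΔ e))
        = (Algebra.ofId R _).comp (Hε e) := by
      apply quotAlgHom_ext e
      simp [Algebra.TensorProduct.lmul'_apply_tmul, Algebra.ofId_apply]
    apply LinearMap.ext
    intro a
    have hk := DFunLike.congr_fun key a
    simp only [AlgHom.comp_apply] at hk
    show LinearMap.mul' R _ (((HS e).toLinearMap.lTensor _) ((HΔ e) a))
        = algebraMap R _ ((Hε e) a)
    rw [← mapLeft_toLinearMap, ← lmul'_toLinearMap]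
    exact hk


end ProjHopfAux

/-- If `R` has a non-trivial idempotent `e`, then `H = R[X]/⟨eX⟩` is a projective, non-finitely
generated Hopf algebra over `R` containing a non-zero integral (the image of `e`); in particular
`R[X] = ⟨eX⟩ ⊕ Re ⊕ R(1-e)[X]` as `R`-modules. -/
theorem projective_nonfinite_hopf_with_integral (R : Type u) [CommRing R]
    (e : R) (he : IsIdempotentElem e) (he0 : e ≠ 0) (he1 : e ≠ 1) :
    (∃ (H : Type u) (_ : CommRing H) (_ : HopfAlgebra R H) (t : H),
        Module.Projective R H ∧ ¬ Module.Finite R H ∧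
        t ≠ 0 ∧ IsLeftIntegral R t ∧ IsRightIntegral R t) ∧
    (Module.Projective R (R[X] ⧸ Ideal.span {(C e) * X}) ∧
      ¬ Module.Finite R (R[X] ⧸ Ideal.span {(C e) * X}) ∧
      (Ideal.Quotient.mk (Ideal.span {(C e) * X}) (C e)) ≠ 0 ∧
      (∀ f : R[X],
        Ideal.Quotient.mk (Ideal.span {(C e) * X}) (C e) *
            Ideal.Quotient.mk (Ideal.span {(C e) * X}) f =
          f.coeff 0 • Ideal.Quotient.mk (Ideal.span {(C e) * X}) (C e) ∧
        Ideal.Quotient.mk (Ideal.span {(C e) * X}) f *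
            Ideal.Quotient.mk (Ideal.span {(C e) * X}) (C e) =
          f.coeff 0 • Ideal.Quotient.mk (Ideal.span {(C e) * X}) (C e))) ∧
    DirectSum.IsInternal (M := R[X])
      (fun i : Fin 3 =>
        if i = 0 then Submodule.restrictScalars R (Ideal.span {(C e) * X})
        else if i = 1 then Submodule.span R {(C e : R[X])}
        else Submodule.restrictScalars R (Ideal.span {(C (1 - e) : R[X])})) := by
  have hproj := ProjHopfAux.projH e he
  have hnfin := ProjHopfAux.notFinH e he he1
  have hne := ProjHopfAux.mk_Ce_ne e he he0
  refine ⟨?_, ⟨hproj, hnfin, hne, ?_⟩, ProjHopfAux.directSumH e he⟩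
  · letI : HopfAlgebra R (R[X] ⧸ Ideal.span {C e * X}) := ProjHopfAux.theHopf e
    refine ⟨R[X] ⧸ Ideal.span {C e * X}, inferInstance, inferInstance,
      Ideal.Quotient.mk _ (C e), hproj, hnfin, hne, ?_, ?_⟩
    · intro h
      obtain ⟨f, rfl⟩ := Ideal.Quotient.mk_surjective h
      exact ((mul_comm _ _).trans (ProjHopfAux.integral_prop e he f)).trans
        (congrArg (fun r : R => r • (Ideal.Quotient.mk (Ideal.span {C e * X}) (C e)))
          (ProjHopfAux.Hε_mk e f).symm)
    · intro h
      obtain ⟨f, rfl⟩ := Ideal.Quotient.mk_surjective h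
      exact (ProjHopfAux.integral_prop e he f).trans
        (congrArg (fun r : R => r • (Ideal.Quotient.mk (Ideal.span {C e * X}) (C e)))
          (ProjHopfAux.Hε_mk e f).symm)
  · intro f
    exact ⟨ProjHopfAux.integral_prop e he f,
      (mul_comm _ _).trans (ProjHopfAux.integral_prop e he f)⟩
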